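/- Let (G_n)_{n≥0} and (s_n)_{n≥0} be real sequences with s_n → 0 as n → ∞. For ε ≥ 0 define L_ε := {n ∈ ℕ : G_n ≥ ε} and S_ε := {n ∈ ℕ : |G_n| < ε}. Suppose the natural densities d(L_ε) exist for all ε ≥ 0 and d(S_ε) exist for all ε > 0, and that lim_{ε→0+} d(L_ε) = d(L_0) and lim_{ε→0+} d(S_ε) = 0. Then the natural density of {n ∈ ℕ : G_n > s_n} exists and equals d(L_0). -/
import Mathlib

open Filter

/-- A set `A ⊆ ℕ` has natural density `δ` if `#{n ≤ x : n ∈ A}/x → δ` as `x → ∞`. -/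
def HasNatDensity (A : Set ℕ) (δ : ℝ) : Prop :=
  Filter.Tendsto (fun x : ℕ => ((A ∩ Set.Iic x).ncard : ℝ) / x) Filter.atTop (nhds δ)

private lemma ncard_off_le {A B : Set ℕ} {N : ℕ}
    (h : ∀ n, N ≤ n → n ∈ A → n ∈ B) (x : ℕ) :
    (A ∩ Set.Iic x).ncard ≤ (B ∩ Set.Iic x).ncard + N := by
  have hsub : A ∩ Set.Iic x ⊆ (B ∩ Set.Iic x) ∪ Set.Iio N := by
    rintro n ⟨hnA, hnx⟩
    by_cases hn : N ≤ n
    · exact Or.inl ⟨h n hn hnA, hnx⟩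
    · exact Or.inr (Nat.lt_of_not_le hn)
  calc (A ∩ Set.Iic x).ncard
      ≤ ((B ∩ Set.Iic x) ∪ Set.Iio N).ncard :=
        Set.ncard_le_ncard hsub
          (((Set.finite_Iic x).inter_of_right _).union (Set.finite_Iio N))
    _ ≤ (B ∩ Set.Iic x).ncard + (Set.Iio N).ncard := Set.ncard_union_le _ _
    _ = (B ∩ Set.Iic x).ncard + N := by
        congr 1
        rw [← Nat.card_coe_set_eq, Nat.card_eq_fintype_card]; simp

private lemma const_div_tendsto (N : ℕ) :
    Tendsto (fun x : ℕ => (N : ℝ) / x) atTop (nhds 0) :=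
  Tendsto.div_atTop tendsto_const_nhds tendsto_natCast_atTop_atTop

private lemma density_fun_nonneg (A : Set ℕ) (x : ℕ) :
    0 ≤ ((A ∩ Set.Iic x).ncard : ℝ) / x :=
  div_nonneg (Nat.cast_nonneg _) (Nat.cast_nonneg _)

private lemma density_fun_bounded (A : Set ℕ) :
    ∀ᶠ x : ℕ in atTop, ((A ∩ Set.Iic x).ncard : ℝ) / x ≤ 2 := by
  filter_upwards [eventually_ge_atTop 1] with x hx
  have hx0 : (0 : ℝ) < x := by exact_mod_cast hx
  have hcard : (A ∩ Set.Iic x).ncard ≤ x + 1 := by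
    have h1 : (A ∩ Set.Iic x).ncard ≤ (Set.Iic x).ncard :=
      Set.ncard_le_ncard Set.inter_subset_right (Set.finite_Iic x)
    have h2 : (Set.Iic x).ncard = x + 1 := by
      rw [← Nat.card_coe_set_eq, Nat.card_eq_fintype_card]; simp
    omega
  have h3 : ((A ∩ Set.Iic x).ncard : ℝ) ≤ (x : ℝ) + 1 := by exact_mod_cast hcard
  have h4 : (x : ℝ) + 1 ≤ 2 * x := by
    have : (1 : ℝ) ≤ x := by exact_mod_cast hx
    linarith
  rw [div_le_iff₀ hx0]
  linarith

/-- If `B ⊆ A` up to finitely many exceptions and `B` has density `δ`,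
then `δ ≤ liminf` of the density function of `A`. -/
private lemma le_liminf_of_superset {A B : Set ℕ} {δ : ℝ} (hB : HasNatDensity B δ)
    (h : ∀ᶠ n in atTop, n ∈ B → n ∈ A) :
    δ ≤ Filter.liminf (fun x : ℕ => ((A ∩ Set.Iic x).ncard : ℝ) / x) atTop := by
  obtain ⟨N, hN⟩ := eventually_atTop.mp h
  set f : ℕ → ℝ := fun x => ((A ∩ Set.Iic x).ncard : ℝ) / x with hf
  set g : ℕ → ℝ := fun x => ((B ∩ Set.Iic x).ncard : ℝ) / x - (N : ℝ) / x with hg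
  have hgt : Tendsto g atTop (nhds δ) := by
    have := hB.sub (const_div_tendsto N)
    simpa using this
  have hgf : ∀ᶠ x in atTop, g x ≤ f x := by
    filter_upwards [eventually_ge_atTop 1] with x hx
    have hx0 : (0 : ℝ) < x := by exact_mod_cast hx
    have hcard := ncard_off_le hN x
    have h1 : ((B ∩ Set.Iic x).ncard : ℝ) ≤ ((A ∩ Set.Iic x).ncard : ℝ) + N := by
      exact_mod_cast hcard
    have h2 : ((B ∩ Set.Iic x).ncard : ℝ) / x ≤ (((A ∩ Set.Iic x).ncard : ℝ) + N) / x := by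
      gcongr
    rw [add_div] at h2
    simp only [hf, hg]
    linarith
  have hbd : IsBoundedUnder (· ≥ ·) atTop g := hgt.isBoundedUnder_ge
  have hcb : IsCoboundedUnder (· ≥ ·) atTop f := by
    apply Filter.IsBoundedUnder.isCoboundedUnder_ge
    exact ⟨2, eventually_map.mpr (density_fun_bounded A)⟩
  calc δ = Filter.liminf g atTop := (hgt.liminf_eq).symm
    _ ≤ Filter.liminf f atTop := Filter.liminf_le_liminf hgf hbd hcb

/-- If `A ⊆ B` up to finitely many exceptions and the density function of `B` tends to `c`
(eventually dominates), then `limsup ≤ c`. General form: f ≤ᶠ g, g → c, f bounded below ⟹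
limsup f ≤ c. -/
private lemma limsup_le_of_tendsto_ge {f g : ℕ → ℝ} {c : ℝ}
    (hfg : ∀ᶠ x in atTop, f x ≤ g x)
    (hg : Tendsto g atTop (nhds c))
    (hf0 : ∀ᶠ x in atTop, 0 ≤ f x) :
    Filter.limsup f atTop ≤ c := by
  have hcb : IsCoboundedUnder (· ≤ ·) atTop f := by
    apply Filter.IsBoundedUnder.isCoboundedUnder_le
    exact ⟨0, eventually_map.mpr hf0⟩
  calc Filter.limsup f atTop ≤ Filter.limsup g atTop :=
        Filter.limsup_le_limsup hfg hcb hg.isBoundedUnder_le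
    _ = c := hg.limsup_eq

theorem density_of_perturbed_positivity_set
    (G s : ℕ → ℝ) (hs : Filter.Tendsto s Filter.atTop (nhds 0))
    (δL : ℝ → ℝ) (δS : ℝ → ℝ)
    (hL : ∀ ε : ℝ, 0 ≤ ε → HasNatDensity {n : ℕ | ε ≤ G n} (δL ε))
    (hS : ∀ ε : ℝ, 0 < ε → HasNatDensity {n : ℕ | |G n| < ε} (δS ε))
    (hLlim : Filter.Tendsto δL (nhdsWithin 0 (Set.Ioi 0)) (nhds (δL 0)))
    (hSlim : Filter.Tendsto δS (nhdsWithin 0 (Set.Ioi 0)) (nhds 0)) :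
    HasNatDensity {n : ℕ | s n < G n} (δL 0) := by
  set T : Set ℕ := {n : ℕ | s n < G n} with hT
  set f : ℕ → ℝ := fun x => ((T ∩ Set.Iic x).ncard : ℝ) / x with hf
  -- |s n| < ε eventually
  have hsmall : ∀ ε : ℝ, 0 < ε → ∀ᶠ n in atTop, |s n| < ε := by
    intro ε hε
    have := Metric.tendsto_atTop.mp hs ε hε
    obtain ⟨N, hN⟩ := this
    filter_upwards [eventually_ge_atTop N] with n hn
    have := hN n hn
    rwa [Real.dist_eq, sub_zero] at this
  -- Step A: liminf lower bound
  have hliminf : ∀ ε : ℝ, 0 < ε → δL ε ≤ Filter.liminf f atTop := by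
    intro ε hε
    apply le_liminf_of_superset (hL ε hε.le)
    filter_upwards [hsmall ε hε] with n hn hnL
    exact lt_of_lt_of_le (lt_of_abs_lt hn) hnL
  -- Step B: limsup upper bound
  have hlimsup : ∀ ε : ℝ, 0 < ε → Filter.limsup f atTop ≤ δL ε + δS ε := by
    intro ε hε
    obtain ⟨N, hN⟩ := eventually_atTop.mp (hsmall ε hε)
    have hincl : ∀ n, N ≤ n → n ∈ T → n ∈ ({m : ℕ | ε ≤ G m} ∪ {m : ℕ | |G m| < ε}) := by
      intro n hn hnT
      by_cases hg : ε ≤ G n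
      · exact Or.inl hg
      · refine Or.inr ?_
        have hsn := hN n hn
        have h1 : s n < G n := hnT
        have h2 : -ε < s n := neg_lt_of_abs_lt hsn
        simp only [Set.mem_setOf_eq, abs_lt]
        exact ⟨by linarith, lt_of_not_ge hg⟩
    set g : ℕ → ℝ := fun x =>
      (({m : ℕ | ε ≤ G m} ∩ Set.Iic x).ncard : ℝ) / x +
      (({m : ℕ | |G m| < ε} ∩ Set.Iic x).ncard : ℝ) / x + (N : ℝ) / x with hg
    have hgt : Tendsto g atTop (nhds (δL ε + δS ε)) := by
      have := ((hL ε hε.le).add (hS ε hε)).add (const_div_tendsto N)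
      simpa using this
    refine limsup_le_of_tendsto_ge ?_ hgt
      (Eventually.of_forall fun x => density_fun_nonneg T x)
    filter_upwards [eventually_ge_atTop 1] with x hx
    have hx0 : (0 : ℝ) < x := by exact_mod_cast hx
    have hcard := ncard_off_le hincl x
    have hcard2 : (({m : ℕ | ε ≤ G m} ∪ {m : ℕ | |G m| < ε}) ∩ Set.Iic x).ncard ≤
        ({m : ℕ | ε ≤ G m} ∩ Set.Iic x).ncard + ({m : ℕ | |G m| < ε} ∩ Set.Iic x).ncard := by
      rw [Set.union_inter_distrib_right]
      exact Set.ncard_union_le _ _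
    have h1 : ((T ∩ Set.Iic x).ncard : ℝ) ≤
        (({m : ℕ | ε ≤ G m} ∩ Set.Iic x).ncard : ℝ) +
        (({m : ℕ | |G m| < ε} ∩ Set.Iic x).ncard : ℝ) + N := by
      exact_mod_cast le_trans hcard (by omega)
    have h2 : ((T ∩ Set.Iic x).ncard : ℝ) / x ≤
        ((({m : ℕ | ε ≤ G m} ∩ Set.Iic x).ncard : ℝ) +
        (({m : ℕ | |G m| < ε} ∩ Set.Iic x).ncard : ℝ) + N) / x := by gcongr
    rw [add_div, add_div] at h2
    simpa [hf, hg] using h2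
  -- Step C: pass to the limit ε → 0+
  have hA : δL 0 ≤ Filter.liminf f atTop := by
    refine le_of_tendsto hLlim ?_
    filter_upwards [eventually_mem_nhdsWithin] with ε (hε : ε ∈ Set.Ioi 0)
    exact hliminf ε hε
  have hB : Filter.limsup f atTop ≤ δL 0 := by
    have htend : Tendsto (fun ε => δL ε + δS ε) (nhdsWithin 0 (Set.Ioi 0))
        (nhds (δL 0)) := by simpa using hLlim.add hSlim
    refine ge_of_tendsto htend ?_
    filter_upwards [eventually_mem_nhdsWithin] with ε (hε : ε ∈ Set.Ioi 0)
    exact hlimsup ε hε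
  -- Step D: conclude
  exact tendsto_of_le_liminf_of_limsup_le hA hB
    ⟨2, eventually_map.mpr (density_fun_bounded T)⟩
    ⟨0, eventually_map.mpr (Eventually.of_forall fun x => density_fun_nonneg T x)⟩
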